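/- Negative eigenvalue of the linearized operator (Lemma 1.1(3) and equation (1.13)): The function g(x) = √(α(x))·Q(x)^{1/(2b)+3/2} satisfies Hg = λ₀·g with λ₀ = −k·(1/2 − 1/(2b²)) < 0; that is, −g''(x) + (1/4 − (b(1+2b)/4)·sech²(νx))·g(x) = (b²λ₀/(2k))·g(x) for all x ∈ ℝ. Equivalently, in unweighted form, 𝓛(Q^{1/(2b)+3/2})(x) = λ₀·α(x)·Q(x)^{1/(2b)+3/2} for all x. -/

import Mathlib

open Real MeasureTheory Filter

noncomputable section

/-- `ν = -(b+1)/2`. -/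
def nuP (b : ℝ) : ℝ := -(b + 1) / 2

/-- The lefton momentum profile `Q(x) = (A(1-b)/2) (cosh(νx))^{b/ν}`. -/
def Qp (b A : ℝ) (x : ℝ) : ℝ :=
  A * (1 - b) / 2 * Real.cosh (nuP b * x) ^ (b / nuP b)

/-- The lefton velocity profile `q(x) = A (cosh(νx))^{-1/ν}`. -/
def qp (b A : ℝ) (x : ℝ) : ℝ := A * Real.cosh (nuP b * x) ^ (-1 / nuP b)

/-- `k = (A(1-b)/2)^{1/b+1}`. -/
def kP (b A : ℝ) : ℝ := (A * (1 - b) / 2) ^ (1 / b + 1)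

/-- The weight `α(x) = Q(x)^{-1/b-2}`. -/
def alphaP (b A : ℝ) (x : ℝ) : ℝ := Qp b A x ^ (-1 / b - 2)

/-- `SQ(x) = (2k(1-b)/b) Q^{-1/b} + (2(b-1)/b) Q`. -/
def SQp (b A : ℝ) (x : ℝ) : ℝ :=
  2 * kP b A * (1 - b) / b * Qp b A x ^ (-1 / b) + 2 * (b - 1) / b * Qp b A x

/-- The Pöschl–Teller potential `H̃₀(x) = 1/4 - (b(1+2b)/4) sech²(νx)`. -/
def Htilde0 (b : ℝ) (x : ℝ) : ℝ :=
  1 / 4 - b * (1 + 2 * b) / 4 * (1 / Real.cosh (nuP b * x)) ^ 2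

/-- The Schrödinger operator `(Hg)(x) = (2k/b²)(−g'' + H̃₀ g)`. -/
def Hop (b A : ℝ) (g : ℝ → ℝ) (x : ℝ) : ℝ :=
  2 * kP b A / b ^ 2 * (-(deriv (deriv g) x) + Htilde0 b x * g x)

/-- The linearized operator `(𝓛f)(x) = k(−((2α/b²) f')' − (2(b+1)/b) α f)`. -/
def Lop (b A : ℝ) (f : ℝ → ℝ) (x : ℝ) : ℝ :=
  kP b A * (-(deriv (fun y => 2 * alphaP b A y / b ^ 2 * deriv f y) x)
    - 2 * (b + 1) / b * alphaP b A x * f x)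

/-- The integrand of the conserved functional `F₂`. -/
def F2Integrand (b : ℝ) (f : ℝ → ℝ) (x : ℝ) : ℝ :=
  f x ^ (-1 / b) * ((deriv f x) ^ 2 / (b ^ 2 * f x ^ 2) + 1)

/-- The squared weighted norm `‖f‖²_{H¹_α} = ∫ (f² + f'²) α`. -/
def HalphaSq (b A : ℝ) (f : ℝ → ℝ) : ℝ :=
  ∫ x, (f x ^ 2 + deriv f x ^ 2) * alphaP b A x

/-- The `𝒵`-norm `‖f‖_𝒵 = ‖f‖_{H¹_α} + sup_x |f(x)|/Q(x)`. -/
def ZNorm (b A : ℝ) (f : ℝ → ℝ) : ℝ :=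
  Real.sqrt (HalphaSq b A f) + ⨆ x : ℝ, |f x| / Qp b A x

/-- `m : ℝ → ℝ → ℝ` (time then space) solves the b-family equation in momentum form,
with velocity `u` satisfying `m = u - u_xx` and `m_t + u m_x + b u_x m = 0`. -/
def IsBFamilySolution (b : ℝ) (m u : ℝ → ℝ → ℝ) : Prop :=
  (∀ t x, m t x = u t x - deriv (deriv (u t)) x) ∧
  ∀ t x, deriv (fun s => m s x) t + u t x * deriv (m t) x + b * deriv (u t) x * m t x = 0

/-- `(v, h)` solves the linearization of the b-family equation around the lefton:
`h - h_xx = v` and `v_t = ∂_x(q h_xx + (b-1) q' h_x - (b+1) q h + q'' h)`. -/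
def IsLinearizedSolution (b A : ℝ) (v h : ℝ → ℝ → ℝ) : Prop :=
  (∀ t x, h t x - deriv (deriv (h t)) x = v t x) ∧
  ∀ t x, deriv (fun s => v s x) t =
    deriv (fun y => qp b A y * deriv (deriv (h t)) y
      + (b - 1) * deriv (qp b A) y * deriv (h t) y
      - (b + 1) * qp b A y * h t y + deriv (deriv (qp b A)) y * h t y) x

/-- The quadratic form `(𝓛η, η) = (2k/b²)∫ η'² α − (2k(b+1)/b)∫ η² α`. -/
def quadFormL (b A : ℝ) (η : ℝ → ℝ) : ℝ :=
  2 * kP b A / b ^ 2 * (∫ x, deriv η x ^ 2 * alphaP b A x)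
    - 2 * kP b A * (b + 1) / b * (∫ x, η x ^ 2 * alphaP b A x)

/-- The monotonicity weight `ψ_L(x) = (2/π) arctan(exp(νx/L))` with `L = 3 - b`. -/
def psiL (b : ℝ) (x : ℝ) : ℝ :=
  2 / Real.pi * Real.arctan (Real.exp (nuP b * x / (3 - b)))


section AuxLemmas

lemma aux_hasDerivAt_cosh (ν x : ℝ) :
    HasDerivAt (fun y => Real.cosh (ν * y)) (ν * Real.sinh (ν * x)) x := by
  have h := ((hasDerivAt_id' x).const_mul ν).cosh
  convert h using 1
  ring

lemma aux_hasDerivAt_sinh (c ν x : ℝ) :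
    HasDerivAt (fun y => c * Real.sinh (ν * y)) (c * (ν * Real.cosh (ν * x))) x := by
  have h := ((Real.hasDerivAt_sinh (ν * x)).comp x ((hasDerivAt_id x).const_mul ν)).const_mul c
  simpa [mul_comm, mul_assoc, mul_left_comm] using h

lemma aux_hasDerivAt_coshpow (c ν p x : ℝ) :
    HasDerivAt (fun y => c * Real.cosh (ν * y) ^ p)
      (c * (ν * p * Real.cosh (ν * x) ^ (p - 1) * Real.sinh (ν * x))) x := by
  have h2 := ((Real.hasDerivAt_rpow_const (x := Real.cosh (ν * x)) (p := p)
    (Or.inl (Real.cosh_pos (ν * x)).ne')).comp x (aux_hasDerivAt_cosh ν x)).const_mul c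
  exact h2.congr_deriv (by ring)

lemma aux_deriv_coshpow (c ν p : ℝ) :
    deriv (fun y => c * Real.cosh (ν * y) ^ p)
      = fun x => c * (ν * p) * Real.cosh (ν * x) ^ (p - 1) * Real.sinh (ν * x) := by
  funext x
  rw [(aux_hasDerivAt_coshpow c ν p x).deriv]
  ring

lemma aux_deriv2_coshpow (c ν p x : ℝ) :
    deriv (deriv (fun y => c * Real.cosh (ν * y) ^ p)) x
      = c * (ν ^ 2 * (p ^ 2 * Real.cosh (ν * x) ^ p
          - p * (p - 1) * Real.cosh (ν * x) ^ (p - 2))) := by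
  rw [aux_deriv_coshpow]
  have h1 : HasDerivAt (fun y => c * (ν * p) * Real.cosh (ν * y) ^ (p - 1) * Real.sinh (ν * y))
      ((c * (ν * p) * (ν * (p-1) * Real.cosh (ν*x) ^ (p - 1 - 1) * Real.sinh (ν*x)))
          * Real.sinh (ν*x)
        + c * (ν * p) * Real.cosh (ν*x) ^ (p-1) * (ν * Real.cosh (ν*x))) x := by
    have hs : HasDerivAt (fun y => Real.sinh (ν * y)) (ν * Real.cosh (ν * x)) x := by
      simpa using aux_hasDerivAt_sinh 1 ν x
    exact (aux_hasDerivAt_coshpow (c * (ν * p)) ν (p-1) x).mul hs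
  rw [h1.deriv]
  have hc := Real.cosh_pos (ν * x)
  have hpe : p - 1 - 1 = p - 2 := by ring
  rw [hpe]
  have e1 : Real.cosh (ν*x) ^ (p-2) * Real.cosh (ν*x) ^ (2:ℕ) = Real.cosh (ν*x) ^ p := by
    rw [← Real.rpow_natCast (Real.cosh (ν*x)) 2, ← Real.rpow_add hc]
    norm_num
  have e2 : Real.cosh (ν*x) ^ (p-1) * Real.cosh (ν*x) = Real.cosh (ν*x) ^ p := by
    nth_rewrite 2 [← Real.rpow_one (Real.cosh (ν*x))]
    rw [← Real.rpow_add hc]; norm_num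
  have hs2 : Real.sinh (ν*x) * Real.sinh (ν*x) = Real.cosh (ν*x) ^ (2:ℕ) - 1 := by
    rw [← sq]; exact Real.sinh_sq _
  linear_combination (c * ν^2 * p * (p-1) * Real.cosh (ν*x) ^ (p-2)) * hs2
    + (c * ν^2 * p * (p-1)) * e1 + (c * ν^2 * p) * e2

lemma aux_scalarX (b : ℝ) (hb1 : b+1 ≠ 0) :
    (-(b+1)/2)^2 * (b/(2*(-(b+1)/2)))^2 = b^2/4 := by
  have h3 : b/(2*(-(b+1)/2)) = -(b/(b+1)) := by
    rw [show 2*(-(b+1)/2) = -(b+1) by ring, div_neg]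
  rw [h3]
  field_simp [hb1]
  ring

lemma aux_scalarY (b : ℝ) (hb1 : b+1 ≠ 0) :
    (-(b+1)/2)^2 * ((b/(2*(-(b+1)/2))) * (b/(2*(-(b+1)/2)) - 1)) = b*(1+2*b)/4 := by
  have h3 : b/(2*(-(b+1)/2)) = -(b/(b+1)) := by
    rw [show 2*(-(b+1)/2) = -(b+1) by ring, div_neg]
  rw [h3]
  field_simp [hb1]
  ring

lemma aux_scalarE1 (b : ℝ) (hb0 : b ≠ 0) (hb1 : b+1 ≠ 0) :
    (-(2*b/(b+1))) * (-1/b - 2) + ((-(2*b/(b+1))) * (1/(2*b) + 3/2) - 1) = 0 := by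
  field_simp
  ring

lemma aux_scalarE2 (b : ℝ) (hb0 : b ≠ 0) (hb1 : b+1 ≠ 0) :
    (-(2*b/(b+1))) * (-1/b - 2) + (-(2*b/(b+1))) * (1/(2*b) + 3/2) = 1 := by
  field_simp
  ring

lemma aux_scalarS (b : ℝ) (hb0 : b ≠ 0) (hb1 : b+1 ≠ 0) :
    2 * (-(b+1)/2 * ((-(2*b/(b+1))) * (1/(2*b) + 3/2))) * (-(b+1)/2) / b^2 + 2*(b+1)/b
      = 1/2 - 1/(2*b^2) := by
  field_simp
  ring

end AuxLemmas

/-- **Negative eigenvalue of the linearized operator** (Lemma 1.1(3), eq. (1.13)):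
`g = √α · Q^{1/(2b)+3/2}` satisfies `Hg = λ₀ g` with `λ₀ = −k(1/2 − 1/(2b²)) < 0`;
equivalently `−g'' + H̃₀ g = (b²λ₀/(2k)) g`, and in unweighted form
`𝓛(Q^{1/(2b)+3/2}) = λ₀ α Q^{1/(2b)+3/2}`. -/
theorem negative_eigenvalue_of_H (b A : ℝ) (hb : b < -1) (hA : 0 < A) :
    (-(kP b A) * (1 / 2 - 1 / (2 * b ^ 2)) < 0) ∧
    (∀ x : ℝ,
      Hop b A (fun y => Real.sqrt (alphaP b A y) * Qp b A y ^ (1 / (2 * b) + 3 / 2)) x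
        = -(kP b A) * (1 / 2 - 1 / (2 * b ^ 2))
            * (Real.sqrt (alphaP b A x) * Qp b A x ^ (1 / (2 * b) + 3 / 2))) ∧
    (∀ x : ℝ,
      -(deriv (deriv (fun y => Real.sqrt (alphaP b A y) * Qp b A y ^ (1 / (2 * b) + 3 / 2))) x)
          + Htilde0 b x * (Real.sqrt (alphaP b A x) * Qp b A x ^ (1 / (2 * b) + 3 / 2))
        = b ^ 2 * (-(kP b A) * (1 / 2 - 1 / (2 * b ^ 2))) / (2 * kP b A)
            * (Real.sqrt (alphaP b A x) * Qp b A x ^ (1 / (2 * b) + 3 / 2))) ∧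
    ∀ x : ℝ,
      Lop b A (fun y => Qp b A y ^ (1 / (2 * b) + 3 / 2)) x
        = -(kP b A) * (1 / 2 - 1 / (2 * b ^ 2)) * alphaP b A x
            * Qp b A x ^ (1 / (2 * b) + 3 / 2) := by
  have hb0 : b ≠ 0 := by intro h; rw [h] at hb; norm_num at hb
  have hb1 : b + 1 ≠ 0 := by intro h; nlinarith
  have hν : (0:ℝ) < nuP b := by simp only [nuP]; linarith
  have hν0 : nuP b ≠ 0 := ne_of_gt hν
  have hC : (0:ℝ) < A * (1 - b) / 2 := by nlinarith
  have hk : 0 < kP b A := by simp only [kP]; exact Real.rpow_pos_of_pos hC _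
  have hk0 : kP b A ≠ 0 := ne_of_gt hk
  have hQpos : ∀ y, 0 < Qp b A y := by
    intro y
    simp only [Qp]
    exact mul_pos hC (Real.rpow_pos_of_pos (Real.cosh_pos _) _)
  have hdiv : b / nuP b = -(2*b/(b+1)) := by
    simp only [nuP]
    rw [div_div_eq_mul_div, div_neg, mul_comm]
  have hQpow : ∀ (e y : ℝ), Qp b A y ^ e
      = (A*(1-b)/2) ^ e * Real.cosh (nuP b * y) ^ (b / nuP b * e) := by
    intro e y
    simp only [Qp]
    rw [Real.mul_rpow hC.le (Real.rpow_nonneg (Real.cosh_pos _).le _),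
      ← Real.rpow_mul (Real.cosh_pos _).le]
  have hgx : ∀ y, Real.sqrt (alphaP b A y) * Qp b A y ^ (1 / (2 * b) + 3 / 2)
      = Real.sqrt (A*(1-b)/2) * Real.cosh (nuP b * y) ^ (b / (2 * nuP b)) := by
    intro y
    have hQy := hQpos y
    simp only [alphaP]
    rw [Real.sqrt_eq_rpow, ← Real.rpow_mul hQy.le, ← Real.rpow_add hQy,
      show (-1 / b - 2) * (1 / 2) + (1 / (2 * b) + 3 / 2) = (1 / 2 : ℝ) by field_simp; ring,
      hQpow (1/2) y,
      show b / nuP b * (1/2) = b / (2 * nuP b) by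
        rw [div_mul_eq_mul_div, mul_one_div, div_div],
      ← Real.sqrt_eq_rpow]
  have hg : (fun y => Real.sqrt (alphaP b A y) * Qp b A y ^ (1 / (2 * b) + 3 / 2))
      = fun y => Real.sqrt (A*(1-b)/2) * Real.cosh (nuP b * y) ^ (b / (2 * nuP b)) :=
    funext hgx
  have h3 : ∀ x : ℝ,
      -(deriv (deriv (fun y => Real.sqrt (alphaP b A y) * Qp b A y ^ (1 / (2 * b) + 3 / 2))) x)
          + Htilde0 b x * (Real.sqrt (alphaP b A x) * Qp b A x ^ (1 / (2 * b) + 3 / 2))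
        = b ^ 2 * (-(kP b A) * (1 / 2 - 1 / (2 * b ^ 2))) / (2 * kP b A)
            * (Real.sqrt (alphaP b A x) * Qp b A x ^ (1 / (2 * b) + 3 / 2)) := by
    intro x
    rw [hg, hgx x, aux_deriv2_coshpow,
      show b ^ 2 * (-(kP b A) * (1 / 2 - 1 / (2 * b ^ 2))) / (2 * kP b A) = (1 - b^2)/4 from by
        field_simp; ring]
    simp only [Htilde0]
    have hX : (nuP b)^2 * (b/(2*nuP b))^2 = b^2/4 := by
      simp only [nuP]; exact aux_scalarX b hb1
    have hY : (nuP b)^2 * ((b/(2*nuP b)) * (b/(2*nuP b) - 1)) = b*(1+2*b)/4 := by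
      simp only [nuP]; exact aux_scalarY b hb1
    have hc := Real.cosh_pos (nuP b * x)
    have e1 : Real.cosh (nuP b*x) ^ (b/(2*nuP b) - 2) * Real.cosh (nuP b*x) ^ (2:ℕ)
        = Real.cosh (nuP b*x) ^ (b/(2*nuP b)) := by
      rw [← Real.rpow_natCast (Real.cosh (nuP b*x)) 2, ← Real.rpow_add hc]
      norm_num
    have he : (1/Real.cosh (nuP b*x))^2 * Real.cosh (nuP b*x) ^ (b/(2*nuP b))
        = Real.cosh (nuP b*x) ^ (b/(2*nuP b) - 2) := by
      rw [div_pow, one_pow, div_mul_eq_mul_div, one_mul,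
        div_eq_iff (pow_ne_zero 2 hc.ne')]
      exact e1.symm
    linear_combination (-(b*(1+2*b)/4) * Real.sqrt (A*(1-b)/2)) * he
      + (Real.sqrt (A*(1-b)/2) * Real.cosh (nuP b * x) ^ (b/(2*nuP b) - 2)) * hY
      + (-(Real.sqrt (A*(1-b)/2) * Real.cosh (nuP b * x) ^ (b/(2*nuP b)))) * hX
  refine ⟨?_, ?_, h3, ?_⟩
  · have hb2 : 1 < b^2 := by nlinarith
    have hpos : 0 < 1/2 - 1/(2*b^2) := by
      have h5 : 1/(2*b^2) < 1/2 := by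
        rw [div_lt_div_iff₀ (by nlinarith) (by norm_num)]
        nlinarith
      linarith
    exact mul_neg_of_neg_of_pos (by linarith) hpos
  · intro x
    simp only [Hop]
    rw [h3 x]
    field_simp
  · intro x
    simp only [Lop]
    have hderivf : deriv (fun z : ℝ => Qp b A z ^ (1 / (2 * b) + 3 / 2))
        = fun y => (A*(1-b)/2) ^ (1 / (2 * b) + 3 / 2)
            * (nuP b * (b / nuP b * (1 / (2 * b) + 3 / 2)))
            * Real.cosh (nuP b * y) ^ (b / nuP b * (1 / (2 * b) + 3 / 2) - 1)
            * Real.sinh (nuP b * y) := by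
      rw [show (fun z : ℝ => Qp b A z ^ (1 / (2 * b) + 3 / 2))
          = fun z => (A*(1-b)/2) ^ (1 / (2 * b) + 3 / 2)
              * Real.cosh (nuP b * z) ^ (b / nuP b * (1 / (2 * b) + 3 / 2)) from
          funext (hQpow _), aux_deriv_coshpow]
    have hφ : ∀ y, 2 * alphaP b A y / b ^ 2
          * deriv (fun z : ℝ => Qp b A z ^ (1 / (2 * b) + 3 / 2)) y
        = 2 * ((A*(1-b)/2) ^ (-1 / b - 2) * ((A*(1-b)/2) ^ (1 / (2 * b) + 3 / 2)
            * (nuP b * (b / nuP b * (1 / (2 * b) + 3 / 2))))) / b^2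
            * Real.sinh (nuP b * y) := by
      intro y
      rw [hderivf]
      simp only [alphaP]
      rw [hQpow]
      have hcc : Real.cosh (nuP b*y) ^ (b / nuP b * (-1 / b - 2))
          * Real.cosh (nuP b*y) ^ (b / nuP b * (1 / (2 * b) + 3 / 2) - 1) = 1 := by
        rw [← Real.rpow_add (Real.cosh_pos _),
          show b / nuP b * (-1 / b - 2) + (b / nuP b * (1 / (2 * b) + 3 / 2) - 1) = 0 from by
            rw [hdiv]; exact aux_scalarE1 b hb0 hb1,
          Real.rpow_zero]
      linear_combination (2 * ((A*(1-b)/2) ^ (-1 / b - 2) * ((A*(1-b)/2) ^ (1 / (2 * b) + 3 / 2)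
        * (nuP b * (b / nuP b * (1 / (2 * b) + 3 / 2))))) / b^2 * Real.sinh (nuP b * y)) * hcc
    rw [funext hφ,
      (aux_hasDerivAt_sinh (2 * ((A*(1-b)/2) ^ (-1 / b - 2) * ((A*(1-b)/2) ^ (1 / (2 * b) + 3 / 2)
        * (nuP b * (b / nuP b * (1 / (2 * b) + 3 / 2))))) / b^2) (nuP b) x).deriv]
    simp only [alphaP]
    rw [hQpow (-1 / b - 2) x, hQpow (1 / (2 * b) + 3 / 2) x]
    have h1c : Real.cosh (nuP b*x) ^ (b / nuP b * (-1 / b - 2))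
        * Real.cosh (nuP b*x) ^ (b / nuP b * (1 / (2 * b) + 3 / 2)) = Real.cosh (nuP b*x) := by
      rw [← Real.rpow_add (Real.cosh_pos _),
        show b / nuP b * (-1 / b - 2) + b / nuP b * (1 / (2 * b) + 3 / 2) = 1 from by
          rw [hdiv]; exact aux_scalarE2 b hb0 hb1,
        Real.rpow_one]
    have hsc : 2 * (nuP b * (b / nuP b * (1 / (2 * b) + 3 / 2))) * nuP b / b^2 + 2*(b+1)/b
        = 1/2 - 1/(2*b^2) := by
      rw [hdiv]
      simp only [nuP]
      exact aux_scalarS b hb0 hb1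
    linear_combination ((kP b A * (1/2 - 1/(2*b^2)) - 2*(kP b A)*(b+1)/b)
        * ((A*(1-b)/2) ^ (-1 / b - 2) * (A*(1-b)/2) ^ (1 / (2 * b) + 3 / 2))) * h1c
      + (-(kP b A * ((A*(1-b)/2) ^ (-1 / b - 2) * (A*(1-b)/2) ^ (1 / (2 * b) + 3 / 2))
          * Real.cosh (nuP b * x))) * hsc
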